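/- There is an absolute constant C > 0 such that for every real N ≥ 2, the sum over all pairs of nonnegative integers (n₁, n₂) with n₁ < n₂ and 2^{n₂} ≤ N of the product ∏_{p prime, p | 2^{n₂−n₁}−1} (1 + 1/p) is at most C·(log N)². -/

import Mathlib

open Finset

noncomputable def ord2 (m : ℕ) : ℕ := orderOf (2 : ZMod m)

lemma dvd_iff_ord2_dvd {m : ℕ} (d : ℕ) : m ∣ 2 ^ d - 1 ↔ ord2 m ∣ d := by
  rw [ord2, orderOf_dvd_iff_pow_eq_one, ← ZMod.natCast_eq_zero_iff,
    Nat.cast_sub Nat.one_le_two_pow]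
  push_cast
  rw [sub_eq_zero, eq_comm]

lemma dvd_ord2_pow (m : ℕ) : m ∣ 2 ^ ord2 m - 1 := (dvd_iff_ord2_dvd _).mpr dvd_rfl

lemma aux_prod_powerset (S : Finset ℕ) :
    ∏ p ∈ S, (1 + 1 / (p : ℝ)) = ∑ i ∈ S.powerset, 1 / ((∏ p ∈ i, p : ℕ) : ℝ) := by
  have : ∀ p ∈ S, (1 + 1/(p:ℝ)) = (fun p : ℕ => 1/(p:ℝ)) p + (fun _ : ℕ => (1:ℝ)) p := by
    intro p _; simp [add_comm]
  rw [Finset.prod_congr rfl this, Finset.prod_add]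
  refine Finset.sum_congr rfl fun t ht => ?_
  rw [Finset.prod_const_one, mul_one]
  push_cast
  simp [one_div, Finset.prod_inv_distrib]

lemma prod_one_add_eq_sum {n : ℕ} (hn : n ≠ 0) :
    ∏ p ∈ n.primeFactors, (1 + 1 / (p : ℝ)) =
      ∑ d ∈ n.divisors with Squarefree d, (1 / d : ℝ) := by
  rw [Nat.sum_divisors_filter_squarefree hn, aux_prod_powerset]
  have h : (UniqueFactorizationMonoid.normalizedFactors n).toFinset = n.primeFactors := by
    rw [Nat.factors_eq]
    exact Nat.toFinset_factors n
  rw [h]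
  refine Finset.sum_congr rfl fun i _ => ?_
  congr 1
  norm_cast
  rw [Finset.prod_eq_multiset_prod]
  simp


lemma pi'31 : Nat.primeCounting' 31 = 10 := by decide
lemma pi30 : Nat.primeCounting 30 = 10 := by decide
lemma pi2 : Nat.primeCounting 2 = 1 := by decide
lemma tot30 : Nat.totient 30 = 8 := by decide

lemma primeCounting_linear (N : ℕ) : 15 * Nat.primeCounting N ≤ 270 + 4 * N := by
  rcases le_or_gt N 30 with h | h
  · have : Nat.primeCounting N ≤ 10 := pi30 ▸ Nat.monotone_primeCounting h
    omega
  · have h31 : 31 + (N - 30) = N + 1 := by omega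
    have key := Nat.primeCounting'_add_le (a := 30) (k := 31) (by norm_num) (by norm_num) (N - 30)
    rw [h31, pi'31, tot30] at key
    have hN : Nat.primeCounting N = Nat.primeCounting' (N + 1) := rfl
    have hq : 30 * ((N - 30) / 30) ≤ N - 30 := Nat.mul_div_le (N - 30) 30
    omega

lemma primeCounting_lt_primeCounting {p q : ℕ} (hq : q.Prime) (h : p < q) :
    Nat.primeCounting p < Nat.primeCounting q := by
  have h1 : Nat.count Nat.Prime (p + 1) ≤ Nat.count Nat.Prime q := Nat.count_monotone _ h
  have h2 : Nat.count Nat.Prime q < Nat.count Nat.Prime (q + 1) :=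
    Nat.count_lt_count_succ_iff.mpr hq
  exact lt_of_le_of_lt h1 h2

lemma one_le_pi {p : ℕ} (hp : p.Prime) : 1 ≤ Nat.primeCounting p :=
  pi2 ▸ Nat.monotone_primeCounting hp.two_le

noncomputable def gg (j : ℕ) : ℝ := if j < 19 then 1 / 2 else (4 / 15) * (1 / ((j : ℝ) - 18))

lemma gg_le_half (j : ℕ) : gg j ≤ 1 / 2 := by
  unfold gg
  split_ifs with h
  · exact le_rfl
  · push_neg at h
    have hj : (19 : ℝ) ≤ (j : ℝ) := by exact_mod_cast h
    have h1 : (1 : ℝ) ≤ (j : ℝ) - 18 := by linarith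
    have : (1 : ℝ) / ((j : ℝ) - 18) ≤ 1 := by
      rw [div_le_one (by linarith)]; linarith
    linarith

lemma gg_antitone : Antitone gg := by
  intro a b hab
  unfold gg
  split_ifs with h1 h2 h2
  · exact le_rfl
  · omega
  · have hj : (19 : ℝ) ≤ (b : ℝ) := by exact_mod_cast (not_lt.mp h1)
    have h3 : (1 : ℝ) ≤ (b : ℝ) - 18 := by linarith
    have : (1 : ℝ) / ((b : ℝ) - 18) ≤ 1 := by
      rw [div_le_one (by linarith)]; linarith
    linarith
  · push_neg at h1 h2
    have hb : (19 : ℝ) ≤ (b : ℝ) := by exact_mod_cast h1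
    have ha : (19 : ℝ) ≤ (a : ℝ) := by exact_mod_cast h2
    have hab' : (a : ℝ) ≤ (b : ℝ) := by exact_mod_cast hab
    have := one_div_le_one_div_of_le (by linarith : (0:ℝ) < (a:ℝ) - 18) (by linarith : (a:ℝ) - 18 ≤ (b:ℝ) - 18)
    nlinarith

lemma sum_antitone_le {g : ℕ → ℝ} (hg : Antitone g) :
    ∀ n (T : Finset ℕ), T.card = n → (∀ j ∈ T, 1 ≤ j) →
      ∑ j ∈ T, g j ≤ ∑ j ∈ Icc 1 n, g j := by
  intro n
  induction n with
  | zero => intro T hT _; rw [Finset.card_eq_zero.mp hT]; simp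
  | succ n ih =>
    intro T hT h1
    have hne : T.Nonempty := Finset.card_pos.mp (by omega)
    set M := T.max' hne with hMdef
    have hM : M ∈ T := T.max'_mem hne
    have hcard : n + 1 ≤ M := by
      have hsub : T ⊆ Icc 1 M := fun j hj =>
        Finset.mem_Icc.mpr ⟨h1 j hj, T.le_max' j hj⟩
      have := Finset.card_le_card hsub
      rw [hT, Nat.card_Icc] at this
      omega
    have herase : (T.erase M).card = n := by
      rw [Finset.card_erase_of_mem hM, hT]
      omega
    have hsplit : ∑ j ∈ T, g j = ∑ j ∈ T.erase M, g j + g M :=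
      (Finset.sum_erase_add _ _ hM).symm
    rw [hsplit, Finset.sum_Icc_succ_top (by omega : 1 ≤ n + 1)]
    exact add_le_add (ih _ herase fun j hj => h1 j (Finset.mem_of_mem_erase hj)) (hg hcard)

lemma sum_gg_le (n : ℕ) : ∑ j ∈ Icc 1 n, gg j ≤ 10 + (1 / 3) * Real.log ((n : ℝ) + 1) := by
  have hlog : (0 : ℝ) ≤ Real.log ((n : ℝ) + 1) :=
    Real.log_nonneg (by push_cast; linarith [Nat.cast_nonneg (α := ℝ) n])
  rcases le_or_gt n 18 with h | h
  · have : ∑ j ∈ Icc 1 n, gg j ≤ ∑ j ∈ Icc 1 n, (1 / 2 : ℝ) :=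
      Finset.sum_le_sum fun j _ => gg_le_half j
    rw [Finset.sum_const, Nat.card_Icc] at this
    have : ∑ j ∈ Icc 1 n, gg j ≤ (n : ℝ) * (1 / 2) := by
      refine this.trans ?_
      have : ((n + 1 - 1 : ℕ) : ℝ) = (n : ℝ) := by push_cast; ring
      rw [nsmul_eq_mul, this]
    have hn : (n : ℝ) ≤ 18 := by exact_mod_cast h
    nlinarith
  · -- n ≥ 19
    have hsplit : Icc 1 n = Icc 1 18 ∪ Ioc 18 n := by
      ext a
      simp only [Finset.mem_Icc, Finset.mem_union, Finset.mem_Ioc]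
      omega
    have hdisj : Disjoint (Icc 1 (18:ℕ)) (Ioc 18 n) := by
      rw [Finset.disjoint_left]
      intro a ha hb
      simp only [Finset.mem_Icc] at ha
      simp only [Finset.mem_Ioc] at hb
      omega
    rw [hsplit, Finset.sum_union hdisj]
    have part1 : ∑ j ∈ Icc 1 (18:ℕ), gg j ≤ 9 := by
      have : ∑ j ∈ Icc 1 (18:ℕ), gg j ≤ ∑ j ∈ Icc 1 (18:ℕ), (1 / 2 : ℝ) :=
        Finset.sum_le_sum fun j _ => gg_le_half j
      rw [Finset.sum_const, Nat.card_Icc] at this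
      norm_num at this
      linarith
    have part2 : ∑ j ∈ Ioc 18 n, gg j ≤ (4 / 15) * (1 + Real.log ((n : ℝ) + 1)) := by
      have heq : ∑ j ∈ Ioc 18 n, gg j
          = (4 / 15) * ∑ j ∈ Ioc 18 n, (1 / ((j : ℝ) - 18)) := by
        rw [Finset.mul_sum]
        refine Finset.sum_congr rfl fun j hj => ?_
        have : ¬ (j < 19) := by
          have := (Finset.mem_Ioc.mp hj).1; omega
        rw [gg, if_neg this]
      rw [heq]
      have hre : ∑ j ∈ Ioc 18 n, (1 / ((j : ℝ) - 18)) = ∑ i ∈ Icc 1 (n - 18), (1 / (i : ℝ)) := by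
        have hmap : (Ioc (0:ℕ) (n - 18)).map (addRightEmbedding 18) = Ioc 18 n := by
          rw [Finset.map_add_right_Ioc]
          congr 1
          · omega
        rw [← hmap, Finset.sum_map]
        have : Ioc (0:ℕ) (n-18) = Icc 1 (n-18) := by
          ext a; simp [Finset.mem_Ioc, Finset.mem_Icc]; omega
        rw [this]
        refine Finset.sum_congr rfl fun i hi => ?_
        simp only [addRightEmbedding_apply]
        push_cast
        ring_nf
      rw [hre]
      have hharm : ∑ i ∈ Icc 1 (n - 18), (1 / (i : ℝ)) = (harmonic (n - 18) : ℝ) := by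
        rw [harmonic_eq_sum_Icc]
        push_cast
        simp [one_div]
      have hle : (harmonic (n - 18) : ℝ) ≤ 1 + Real.log ((n : ℝ) - 18) := by
        have := harmonic_le_one_add_log (n - 18)
        have hcast : ((n - 18 : ℕ) : ℝ) = (n : ℝ) - 18 := by
          have : (18:ℕ) ≤ n := by omega
          push_cast [this]; ring
        rw [hcast] at this
        exact this
      have hlogle : Real.log ((n : ℝ) - 18) ≤ Real.log ((n : ℝ) + 1) := by
        have h19 : (19 : ℝ) ≤ (n : ℝ) := by exact_mod_cast h
        exact Real.log_le_log (by linarith) (by linarith)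
      rw [hharm]
      nlinarith
    have : (4 / 15 : ℝ) * (1 + Real.log ((n:ℝ) + 1)) ≤ 4/15 + (1/3) * Real.log ((n:ℝ)+1) := by
      nlinarith
    linarith

lemma primesum (S : Finset ℕ) (hS : ∀ p ∈ S, p.Prime) :
    ∑ p ∈ S, (1 / (p : ℝ)) ≤ 10 + (1 / 3) * Real.log ((S.card : ℝ) + 1) := by
  have hinj : Set.InjOn Nat.primeCounting S := by
    intro p hp q hq hpq
    by_contra hne
    rcases lt_or_gt_of_ne hne with hlt | hlt
    · exact absurd hpq (Nat.lt_irrefl _ (hpq ▸ primeCounting_lt_primeCounting (hS q hq) hlt)).elim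
    · exact absurd hpq.symm (Nat.lt_irrefl _ (hpq ▸ primeCounting_lt_primeCounting (hS p hp) hlt)).elim
  have hstep : ∑ p ∈ S, (1 / (p : ℝ)) ≤ ∑ p ∈ S, gg (Nat.primeCounting p) := by
    refine Finset.sum_le_sum fun p hp => ?_
    have hprime := hS p hp
    have hp2 : (2 : ℝ) ≤ (p : ℝ) := by exact_mod_cast hprime.two_le
    by_cases hc : Nat.primeCounting p < 19
    · rw [gg, if_pos hc]
      rw [div_le_div_iff₀ (by linarith) (by norm_num)]
      linarith
    · rw [gg, if_neg hc]
      push_neg at hc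
      have hlin := primeCounting_linear p
      have hc' : (19 : ℝ) ≤ (Nat.primeCounting p : ℝ) := by exact_mod_cast hc
      have hlin' : 15 * (Nat.primeCounting p : ℝ) ≤ 270 + 4 * (p : ℝ) := by exact_mod_cast hlin
      rw [mul_one_div, div_le_div_iff₀ (by linarith) (by linarith)]
      linarith
  have himg : ∑ p ∈ S, gg (Nat.primeCounting p) = ∑ j ∈ S.image Nat.primeCounting, gg j :=
    (Finset.sum_image fun p hp q hq h => hinj hp hq h).symm
  have hcard : (S.image Nat.primeCounting).card = S.card := Finset.card_image_of_injOn hinj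
  have h1 : ∀ j ∈ S.image Nat.primeCounting, 1 ≤ j := by
    intro j hj
    obtain ⟨p, hp, rfl⟩ := Finset.mem_image.mp hj
    exact one_le_pi (hS p hp)
  calc ∑ p ∈ S, (1 / (p : ℝ)) ≤ ∑ j ∈ S.image Nat.primeCounting, gg j := by
        rw [← himg]; exact hstep
    _ ≤ ∑ j ∈ Icc 1 S.card, gg j := sum_antitone_le gg_antitone S.card _ hcard h1
    _ ≤ 10 + (1 / 3) * Real.log ((S.card : ℝ) + 1) := sum_gg_le S.card

noncomputable def Mx (x : ℕ) : ℕ := ∏ t ∈ Icc 1 x, (2 ^ t - 1)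

lemma Mx_ne_zero (x : ℕ) : Mx x ≠ 0 := by
  rw [Mx, Finset.prod_ne_zero_iff]
  intro t ht
  have : 1 ≤ t := (Finset.mem_Icc.mp ht).1
  have : 2 ≤ 2 ^ t := by
    calc 2 = 2 ^ 1 := (pow_one 2).symm
    _ ≤ 2 ^ t := Nat.pow_le_pow_right (by norm_num) this
  omega

lemma Mx_le (x : ℕ) : Mx x ≤ 2 ^ (x ^ 2) := by
  calc Mx x ≤ ∏ t ∈ Icc 1 x, 2 ^ t := by
        exact Finset.prod_le_prod' fun t _ => Nat.sub_le _ _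
    _ = 2 ^ (∑ t ∈ Icc 1 x, t) := by rw [Finset.prod_pow_eq_pow_sum]
    _ ≤ 2 ^ (x ^ 2) := by
        refine Nat.pow_le_pow_right (by norm_num) ?_
        calc ∑ t ∈ Icc 1 x, t ≤ ∑ t ∈ Icc 1 x, x :=
              Finset.sum_le_sum fun t ht => (Finset.mem_Icc.mp ht).2
          _ = (Icc 1 x).card * x := by rw [Finset.sum_const, smul_eq_mul]
          _ ≤ x * x := by
              have : (Icc 1 x).card = x := by rw [Nat.card_Icc]; omega
              rw [this]
          _ = x ^ 2 := (sq x).symm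

lemma card_primeFactors_Mx (x : ℕ) : (Mx x).primeFactors.card ≤ x ^ 2 := by
  have h1 : 2 ^ (Mx x).primeFactors.card ≤ ∏ p ∈ (Mx x).primeFactors, p := by
    refine Finset.pow_card_le_prod _ _ _ fun p hp => (Nat.prime_of_mem_primeFactors hp).two_le
  have h2 : ∏ p ∈ (Mx x).primeFactors, p ≤ Mx x :=
    Nat.le_of_dvd (Nat.pos_of_ne_zero (Mx_ne_zero x)) (Nat.prod_primeFactors_dvd _)
  have := h1.trans (h2.trans (Mx_le x))
  exact (Nat.pow_le_pow_iff_right (by norm_num)).mp this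

lemma dvd_Mx {m x : ℕ} (hm : Squarefree m) (h0 : ord2 m ≠ 0) (hx : ord2 m ≤ x) :
    m ∣ Mx x := by
  rw [← Nat.prod_primeFactors_of_squarefree hm]
  refine Finset.prod_primes_dvd _ (fun p hp => (Nat.prime_of_mem_primeFactors hp).prime) ?_
  intro p hp
  have hpm : p ∣ m := Nat.dvd_of_mem_primeFactors hp
  have h1 : p ∣ 2 ^ ord2 m - 1 := hpm.trans (dvd_ord2_pow m)
  have h2 : ord2 p ∣ ord2 m := (dvd_iff_ord2_dvd _).mp h1
  have h3 : ord2 p ≠ 0 := by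
    intro h
    exact h0 (Nat.eq_zero_of_zero_dvd (h ▸ h2))
  have h4 : (2 ^ ord2 p - 1 : ℕ) ∣ Mx x :=
    Finset.dvd_prod_of_mem _ (Finset.mem_Icc.mpr
      ⟨Nat.one_le_iff_ne_zero.mpr h3, le_trans (Nat.le_of_dvd (Nat.pos_of_ne_zero h0) h2) hx⟩)
  exact (dvd_ord2_pow p).trans h4

lemma class_bound (W : Finset ℕ) (x : ℕ)
    (hW : ∀ m ∈ W, Squarefree m ∧ ord2 m ≠ 0 ∧ ord2 m ≤ x) :
    ∑ m ∈ W, (1 / (m : ℝ)) ≤ Real.exp (10 + (1 / 3) * Real.log ((x : ℝ) ^ 2 + 1)) := by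
  have hsub : W ⊆ (Mx x).divisors.filter Squarefree := by
    intro m hm
    obtain ⟨h1, h2, h3⟩ := hW m hm
    exact Finset.mem_filter.mpr ⟨Nat.mem_divisors.mpr ⟨dvd_Mx h1 h2 h3, Mx_ne_zero x⟩, h1⟩
  have hstep1 : ∑ m ∈ W, (1 / (m : ℝ)) ≤ ∑ m ∈ (Mx x).divisors.filter Squarefree, (1 / (m : ℝ)) :=
    Finset.sum_le_sum_of_subset_of_nonneg hsub (fun m _ _ => by positivity)
  have hstep2 : ∑ m ∈ (Mx x).divisors.filter Squarefree, (1 / (m : ℝ))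
      = ∏ p ∈ (Mx x).primeFactors, (1 + 1 / (p : ℝ)) := (prod_one_add_eq_sum (Mx_ne_zero x)).symm
  have hstep3 : ∏ p ∈ (Mx x).primeFactors, (1 + 1 / (p : ℝ))
      ≤ Real.exp (∑ p ∈ (Mx x).primeFactors, (1 / (p : ℝ))) := by
    rw [Real.exp_sum]
    refine Finset.prod_le_prod (fun p _ => by positivity) (fun p _ => ?_)
    have := Real.add_one_le_exp (1 / (p : ℝ))
    linarith
  have hstep4 : ∑ p ∈ (Mx x).primeFactors, (1 / (p : ℝ))
      ≤ 10 + (1 / 3) * Real.log (((Mx x).primeFactors.card : ℝ) + 1) :=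
    primesum _ (fun p hp => Nat.prime_of_mem_primeFactors hp)
  have hstep5 : Real.log (((Mx x).primeFactors.card : ℝ) + 1) ≤ Real.log ((x : ℝ) ^ 2 + 1) := by
    refine Real.log_le_log (by positivity) ?_
    have : ((Mx x).primeFactors.card : ℝ) ≤ ((x ^ 2 : ℕ) : ℝ) := by
      exact_mod_cast card_primeFactors_Mx x
    push_cast at this
    linarith
  calc ∑ m ∈ W, (1 / (m : ℝ)) ≤ ∏ p ∈ (Mx x).primeFactors, (1 + 1 / (p : ℝ)) := by
        rw [← hstep2]; exact hstep1
    _ ≤ Real.exp (∑ p ∈ (Mx x).primeFactors, (1 / (p : ℝ))) := hstep3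
    _ ≤ Real.exp (10 + (1 / 3) * Real.log ((x : ℝ) ^ 2 + 1)) := by
        refine Real.exp_le_exp.mpr ?_
        linarith

lemma key_bound (V : Finset ℕ) (hV : ∀ m ∈ V, Squarefree m ∧ ord2 m ≠ 0) :
    ∑ m ∈ V, 1 / ((m : ℝ) * (ord2 m : ℝ)) ≤ 8 * Real.exp 10 := by
  classical
  set K := V.sup (fun m => Nat.log 8 (ord2 m)) with hK
  have hmap : ∀ m ∈ V, Nat.log 8 (ord2 m) ∈ Finset.range (K + 1) := fun m hm =>
    Finset.mem_range.mpr (Nat.lt_succ_of_le (Finset.le_sup (f := fun m => Nat.log 8 (ord2 m)) hm))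
  rw [← Finset.sum_fiberwise_of_maps_to hmap]
  have fib : ∀ k, ∑ m ∈ V.filter (fun m => Nat.log 8 (ord2 m) = k),
      1 / ((m : ℝ) * (ord2 m : ℝ)) ≤ (4 * Real.exp 10) * (1 / 2) ^ k := by
    intro k
    set W := V.filter (fun m => Nat.log 8 (ord2 m) = k) with hW
    have hWm : ∀ m ∈ W, Squarefree m ∧ ord2 m ≠ 0 ∧ Nat.log 8 (ord2 m) = k := by
      intro m hm
      obtain ⟨hmV, hmk⟩ := Finset.mem_filter.mp hm
      exact ⟨(hV m hmV).1, (hV m hmV).2, hmk⟩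
    have step1 : ∑ m ∈ W, 1 / ((m : ℝ) * (ord2 m : ℝ))
        ≤ (1 / 8 ^ k) * ∑ m ∈ W, (1 / (m : ℝ)) := by
      rw [Finset.mul_sum]
      refine Finset.sum_le_sum fun m hm => ?_
      obtain ⟨hsf, h0, hlog⟩ := hWm m hm
      have hord : (8 : ℕ) ^ k ≤ ord2 m := by
        rw [← hlog]
        exact Nat.pow_log_le_self 8 h0
    -- 1/(m * ord) ≤ (1/8^k) * (1/m)
      have hm0 : (0 : ℝ) < (m : ℝ) := by
        have := hsf.ne_zero
        positivity
      have hordR : (8 : ℝ) ^ k ≤ (ord2 m : ℝ) := by exact_mod_cast hord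
      have h8 : (0 : ℝ) < 8 ^ k := by positivity
      have hmm : (8 : ℝ) ^ k * (m : ℝ) ≤ (m : ℝ) * (ord2 m : ℝ) := by
        rw [mul_comm]
        exact mul_le_mul_of_nonneg_left hordR hm0.le
      rw [div_mul_div_comm, one_mul]
      exact one_div_le_one_div_of_le (by positivity) hmm
    have step2 : ∑ m ∈ W, (1 / (m : ℝ)) ≤ Real.exp 10 * 4 ^ (k + 1) := by
      have hcb := class_bound W (8 ^ (k + 1) - 1) ?_
      · refine hcb.trans ?_
        have hx : (((8 ^ (k + 1) - 1 : ℕ)) : ℝ) ≤ (8 : ℝ) ^ (k + 1) - 1 := by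
          have h18 : (1 : ℕ) ≤ 8 ^ (k + 1) := Nat.one_le_pow _ _ (by norm_num)
          push_cast [h18]
          norm_num
        have hx0 : (0 : ℝ) ≤ (((8 ^ (k + 1) - 1 : ℕ)) : ℝ) := by positivity
        have hsq : (((8 ^ (k + 1) - 1 : ℕ)) : ℝ) ^ 2 + 1 ≤ ((8 : ℝ) ^ (k + 1)) ^ 2 := by
          have h8p : (1 : ℝ) ≤ (8 : ℝ) ^ (k + 1) := by
            apply one_le_pow₀
            norm_num
          nlinarith
        have hlog : Real.log ((((8 ^ (k + 1) - 1 : ℕ)) : ℝ) ^ 2 + 1)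
            ≤ Real.log (((8 : ℝ) ^ (k + 1)) ^ 2) := Real.log_le_log (by positivity) hsq
        have hlog8 : Real.log (((8 : ℝ) ^ (k + 1)) ^ 2) = (2 * (k + 1)) * Real.log 8 := by
          rw [← pow_mul, Real.log_pow]
          push_cast
          ring
        have hlog2 : Real.log (8 : ℝ) = 3 * Real.log 2 := by
          have : (8 : ℝ) = 2 ^ 3 := by norm_num
          rw [this, Real.log_pow]
          push_cast
          ring
        have hfinal : 10 + (1 / 3) * Real.log ((((8 ^ (k + 1) - 1 : ℕ)) : ℝ) ^ 2 + 1)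
            ≤ 10 + Real.log ((4 : ℝ) ^ (k + 1)) := by
          have h4 : Real.log ((4 : ℝ) ^ (k + 1)) = (k + 1) * Real.log 4 := by
            rw [Real.log_pow]; push_cast; ring
          have hlog4 : Real.log (4 : ℝ) = 2 * Real.log 2 := by
            have : (4 : ℝ) = 2 ^ 2 := by norm_num
            rw [this, Real.log_pow]; push_cast; ring
          rw [h4, hlog4]
          have := hlog.trans_eq hlog8
          rw [hlog2] at this
          linarith
        calc Real.exp (10 + (1 / 3) * Real.log ((((8 ^ (k + 1) - 1 : ℕ)) : ℝ) ^ 2 + 1))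
            ≤ Real.exp (10 + Real.log ((4 : ℝ) ^ (k + 1))) := Real.exp_le_exp.mpr hfinal
          _ = Real.exp 10 * 4 ^ (k + 1) := by
              rw [Real.exp_add, Real.exp_log (by positivity)]
      · intro m hm
        obtain ⟨hsf, h0, hlog⟩ := hWm m hm
        refine ⟨hsf, h0, ?_⟩
        have := Nat.lt_pow_succ_log_self (by norm_num : 1 < 8) (ord2 m)
        rw [hlog] at this
        omega
    calc ∑ m ∈ W, 1 / ((m : ℝ) * (ord2 m : ℝ)) ≤ (1 / 8 ^ k) * ∑ m ∈ W, (1 / (m : ℝ)) := step1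
      _ ≤ (1 / 8 ^ k) * (Real.exp 10 * 4 ^ (k + 1)) := by
          refine mul_le_mul_of_nonneg_left step2 (by positivity)
      _ = (4 * Real.exp 10) * (1 / 2) ^ k := by
          rw [div_pow, one_pow]
          field_simp
          ring_nf
          rw [show (8 : ℝ) ^ k = 4 ^ k * 2 ^ k by rw [← mul_pow]; norm_num]
          ring
  calc ∑ k ∈ Finset.range (K + 1), ∑ m ∈ V.filter (fun m => Nat.log 8 (ord2 m) = k),
        1 / ((m : ℝ) * (ord2 m : ℝ))
      ≤ ∑ k ∈ Finset.range (K + 1), (4 * Real.exp 10) * (1 / 2) ^ k :=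
        Finset.sum_le_sum fun k _ => fib k
    _ = (4 * Real.exp 10) * ∑ k ∈ Finset.range (K + 1), (1 / 2 : ℝ) ^ k := by
        rw [Finset.mul_sum]
    _ ≤ (4 * Real.exp 10) * 2 := by
        refine mul_le_mul_of_nonneg_left ?_ (by positivity)
        have := geom_sum_eq (by norm_num : (1 / 2 : ℝ) ≠ 1) (K + 1)
        rw [this]
        have h : (0 : ℝ) ≤ (1 / 2 : ℝ) ^ (K + 1) := by positivity
        have h2 : (1 / 2 : ℝ) ^ (K + 1) ≤ 1 := pow_le_one₀ (by norm_num) (by norm_num)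
        rw [div_le_iff_of_neg (by norm_num : (1 / 2 - 1 : ℝ) < 0)]
        linarith
    _ = 8 * Real.exp 10 := by ring

theorem romanoff_sum_bound :
    ∃ C : ℝ, 0 < C ∧ ∀ N : ℝ, 2 ≤ N →
      ∑ q ∈ (Finset.range (⌊N⌋₊ + 1) ×ˢ Finset.range (⌊N⌋₊ + 1)).filter
          (fun q => q.1 < q.2 ∧ (2 : ℝ) ^ q.2 ≤ N),
        ∏ p ∈ ((2 ^ (q.2 - q.1) - 1 : ℕ)).primeFactors, (1 + 1 / (p : ℝ))
        ≤ C * (Real.log N) ^ 2 := by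
  classical
  refine ⟨8 * Real.exp 10 / (Real.log 2) ^ 2, by positivity, fun N hN => ?_⟩
  set P : ℕ → ℝ := fun d => ∏ p ∈ ((2 ^ d - 1 : ℕ)).primeFactors, (1 + 1 / (p : ℝ)) with hP
  have hPnonneg : ∀ d, 0 ≤ P d := fun d =>
    Finset.prod_nonneg fun p _ => by positivity
  have hfloor2 : 2 ≤ ⌊N⌋₊ := Nat.le_floor (by exact_mod_cast hN)
  set D := Nat.log 2 ⌊N⌋₊ with hD
  set F := (Finset.range (⌊N⌋₊ + 1) ×ˢ Finset.range (⌊N⌋₊ + 1)).filter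
      (fun q => q.1 < q.2 ∧ (2 : ℝ) ^ q.2 ≤ N) with hF
  -- Step A : reduce to pairs (difference, top) in Icc 1 D × Icc 1 D
  have hmemF : ∀ q ∈ F, q.1 < q.2 ∧ q.2 ≤ D := by
    intro q hq
    obtain ⟨-, hlt, hle⟩ := Finset.mem_filter.mp hq
    refine ⟨hlt, ?_⟩
    have h1 : ((2 ^ q.2 : ℕ) : ℝ) ≤ N := by push_cast; exact hle
    have h2 : (2 ^ q.2 : ℕ) ≤ ⌊N⌋₊ := Nat.le_floor h1
    exact (Nat.le_log_iff_pow_le (by norm_num) (by omega)).mpr h2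
  have hstepA : ∑ q ∈ F, P (q.2 - q.1) ≤
      ∑ r ∈ Finset.Icc 1 D ×ˢ Finset.Icc 1 D, P r.1 := by
    have hinj : ∀ q ∈ F, ∀ q' ∈ F,
        (fun q : ℕ × ℕ => (q.2 - q.1, q.2)) q = (fun q : ℕ × ℕ => (q.2 - q.1, q.2)) q' →
          q = q' := by
      intro q hq q' hq' h
      obtain ⟨h1, -⟩ := hmemF q hq
      obtain ⟨h1', -⟩ := hmemF q' hq'
      simp only [Prod.mk.injEq] at h
      obtain ⟨ha, hb⟩ := h
      have : q.1 = q'.1 := by omega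
      exact Prod.ext this hb
    have himg : ∑ r ∈ F.image (fun q : ℕ × ℕ => (q.2 - q.1, q.2)), P r.1
        = ∑ q ∈ F, P (q.2 - q.1) := Finset.sum_image hinj
    rw [← himg]
    refine Finset.sum_le_sum_of_subset_of_nonneg ?_ (fun r _ _ => hPnonneg _)
    intro r hr
    obtain ⟨q, hq, rfl⟩ := Finset.mem_image.mp hr
    obtain ⟨h1, h2⟩ := hmemF q hq
    simp only [Finset.mem_product, Finset.mem_Icc]
    omega
  -- Step B : the product sum equals D * ∑_{d ∈ Icc 1 D} P d
  have hstepB : ∑ r ∈ Finset.Icc 1 D ×ˢ Finset.Icc 1 D, P r.1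
      = (D : ℝ) * ∑ d ∈ Finset.Icc 1 D, P d := by
    rw [Finset.sum_product, Finset.mul_sum]
    refine Finset.sum_congr rfl fun d _ => ?_
    show ∑ _y ∈ Finset.Icc 1 D, P d = _
    rw [Finset.sum_const, Nat.card_Icc, Nat.add_sub_cancel, nsmul_eq_mul]
  -- Step C : ∑_{d ∈ Icc 1 D} P d ≤ D * (8 e^10)
  have hstepC : ∑ d ∈ Finset.Icc 1 D, P d ≤ (D : ℝ) * (8 * Real.exp 10) := by
    set U := Finset.Icc 1 (2 ^ D) with hU
    have hrw : ∀ d ∈ Finset.Icc 1 D, P d =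
        ∑ m ∈ U, (if m ∣ 2 ^ d - 1 ∧ Squarefree m then (1 / (m : ℝ)) else 0) := by
      intro d hd
      obtain ⟨hd1, hd2⟩ := Finset.mem_Icc.mp hd
      have hpow : (2 : ℕ) ≤ 2 ^ d := by
        calc (2 : ℕ) = 2 ^ 1 := (pow_one 2).symm
          _ ≤ 2 ^ d := Nat.pow_le_pow_right (by norm_num) hd1
      have hne : (2 ^ d - 1 : ℕ) ≠ 0 := by omega
      have hdvd_le : (2 ^ d - 1 : ℕ) ≤ 2 ^ D := by
        have : (2 : ℕ) ^ d ≤ 2 ^ D := Nat.pow_le_pow_right (by norm_num) hd2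
        omega
      have hset : (2 ^ d - 1 : ℕ).divisors.filter Squarefree
          = U.filter (fun m => m ∣ 2 ^ d - 1 ∧ Squarefree m) := by
        ext m
        simp only [Finset.mem_filter, Nat.mem_divisors, hU, Finset.mem_Icc]
        constructor
        · rintro ⟨⟨hdvd, -⟩, hsf⟩
          have hm0 : m ≠ 0 := by
            rintro rfl
            exact hne (Nat.eq_zero_of_zero_dvd hdvd)
          exact ⟨⟨Nat.one_le_iff_ne_zero.mpr hm0,
            (Nat.le_of_dvd (by omega) hdvd).trans hdvd_le⟩, hdvd, hsf⟩
        · rintro ⟨-, hdvd, hsf⟩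
          exact ⟨⟨hdvd, hne⟩, hsf⟩
      rw [hP]
      dsimp only
      rw [prod_one_add_eq_sum hne, hset, Finset.sum_filter]
    set V := U.filter (fun m => Squarefree m ∧ ord2 m ≠ 0) with hV
    have hinner : ∀ m ∈ U,
        ∑ d ∈ Finset.Icc 1 D, (if m ∣ 2 ^ d - 1 ∧ Squarefree m then (1 / (m : ℝ)) else 0)
        ≤ (if Squarefree m ∧ ord2 m ≠ 0 then (D : ℝ) / (ord2 m : ℝ) * (1 / (m : ℝ)) else 0) := by
      intro m hm
      by_cases hsf : Squarefree m
      · simp only [hsf, and_true, true_and]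
        have hcond : ∀ d : ℕ, (m ∣ 2 ^ d - 1) ↔ ord2 m ∣ d := fun d => dvd_iff_ord2_dvd d
        simp only [hcond]
        rw [← Finset.sum_filter, Finset.sum_const]
        have hicc : Finset.Icc 1 D = Finset.Ioc 0 D := rfl
        have hcard : ((Finset.Icc 1 D).filter (fun d => ord2 m ∣ d)).card = D / ord2 m := by
          rw [hicc]
          exact Nat.Ioc_filter_dvd_card_eq_div D (ord2 m)
        rw [hcard, nsmul_eq_mul]
        by_cases hord : ord2 m = 0
        · simp [hord]
        · rw [if_pos hord]
          refine mul_le_mul_of_nonneg_right ?_ (by positivity)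
          exact Nat.cast_div_le
      · simp [hsf]
    have hsplit : ∑ m ∈ U, (if Squarefree m ∧ ord2 m ≠ 0
          then (D : ℝ) / (ord2 m : ℝ) * (1 / (m : ℝ)) else 0)
        = ∑ m ∈ V, (D : ℝ) / (ord2 m : ℝ) * (1 / (m : ℝ)) := (Finset.sum_filter _ _).symm
    have hVsum : ∑ m ∈ V, (D : ℝ) / (ord2 m : ℝ) * (1 / (m : ℝ))
        = (D : ℝ) * ∑ m ∈ V, 1 / ((m : ℝ) * (ord2 m : ℝ)) := by
      rw [Finset.mul_sum]
      refine Finset.sum_congr rfl fun m hm => ?_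
      rw [div_mul_div_comm, mul_one, one_div, mul_inv, div_eq_mul_inv, mul_comm ((m:ℝ)⁻¹) _]
      ring
    have hVprop : ∀ m ∈ V, Squarefree m ∧ ord2 m ≠ 0 := fun m hm =>
      (Finset.mem_filter.mp hm).2
    calc ∑ d ∈ Finset.Icc 1 D, P d
        = ∑ d ∈ Finset.Icc 1 D, ∑ m ∈ U,
            (if m ∣ 2 ^ d - 1 ∧ Squarefree m then (1 / (m : ℝ)) else 0) :=
          Finset.sum_congr rfl hrw
      _ = ∑ m ∈ U, ∑ d ∈ Finset.Icc 1 D,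
            (if m ∣ 2 ^ d - 1 ∧ Squarefree m then (1 / (m : ℝ)) else 0) := Finset.sum_comm
      _ ≤ ∑ m ∈ U, (if Squarefree m ∧ ord2 m ≠ 0
            then (D : ℝ) / (ord2 m : ℝ) * (1 / (m : ℝ)) else 0) :=
          Finset.sum_le_sum hinner
      _ = (D : ℝ) * ∑ m ∈ V, 1 / ((m : ℝ) * (ord2 m : ℝ)) := by rw [hsplit, hVsum]
      _ ≤ (D : ℝ) * (8 * Real.exp 10) :=
          mul_le_mul_of_nonneg_left (key_bound V hVprop) (Nat.cast_nonneg D)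
  -- final assembly
  have hDlog : (D : ℝ) * Real.log 2 ≤ Real.log N := by
    have h1 : (2 : ℕ) ^ D ≤ ⌊N⌋₊ := Nat.pow_log_le_self 2 (by omega)
    have h2 : ((2 : ℝ)) ^ D ≤ N := by
      calc ((2 : ℝ)) ^ D = (((2 ^ D : ℕ)) : ℝ) := by push_cast; ring
        _ ≤ (⌊N⌋₊ : ℝ) := by exact_mod_cast h1
        _ ≤ N := Nat.floor_le (by linarith)
    have h3 : Real.log ((2 : ℝ) ^ D) ≤ Real.log N :=
      Real.log_le_log (by positivity) h2
    rw [Real.log_pow] at h3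
    exact_mod_cast h3
  have hlog2 : (0 : ℝ) < Real.log 2 := Real.log_pos (by norm_num)
  have hlogN : (0 : ℝ) ≤ Real.log N := Real.log_nonneg (by linarith)
  have hD0 : (0 : ℝ) ≤ (D : ℝ) := Nat.cast_nonneg D
  have hkey : (D : ℝ) * (D : ℝ) * (Real.log 2) ^ 2 ≤ (Real.log N) ^ 2 := by
    have := mul_le_mul hDlog hDlog (by positivity) hlogN
    nlinarith
  calc ∑ q ∈ F, P (q.2 - q.1)
      ≤ ∑ r ∈ Finset.Icc 1 D ×ˢ Finset.Icc 1 D, P r.1 := hstepA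
    _ = (D : ℝ) * ∑ d ∈ Finset.Icc 1 D, P d := hstepB
    _ ≤ (D : ℝ) * ((D : ℝ) * (8 * Real.exp 10)) := mul_le_mul_of_nonneg_left hstepC hD0
    _ ≤ 8 * Real.exp 10 / (Real.log 2) ^ 2 * (Real.log N) ^ 2 := by
        rw [div_mul_eq_mul_div, le_div_iff₀ (by positivity)]
        have hexp : (0 : ℝ) < Real.exp 10 := Real.exp_pos 10
        nlinarith
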